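/- Let S, T, R be pairwise disjoint nonempty finite sets, let π, τ, ρ be partitions of S, T, R respectively, and let s, s' be two distinct elements of S. Then, in the free K-module on partitions, parallel associativity holds: (π ▷_s τ) ▷_{s'} ρ = (π ▷_{s'} ρ) ▷_s τ. -/

import Mathlib

variable {α : Type*} [DecidableEq α]

/-- A partition of a finite set `S`: a finite set of nonempty, pairwise disjoint
blocks whose union is `S`. -/
def IsSetPartition (π : Finset (Finset α)) (S : Finset α) : Prop :=
  (∀ B ∈ π, B.Nonempty) ∧
  (∀ B ∈ π, ∀ C ∈ π, B ≠ C → Disjoint B C) ∧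
  π.biUnion id = S

/-- The block of the partition `π` containing `s` (the union of all blocks
containing `s`, which is the unique such block when `π` is a partition). -/
def blockOf (π : Finset (Finset α)) (s : α) : Finset α :=
  π.biUnion (fun B => if s ∈ B then B else ∅)

/-- The NPL partial composition of set partitions,
`π ▷_s τ := Σ_{C ∈ τ} [(π \ {B_s}) ∪ {(B_s \ {s}) ∪ C} ∪ (τ \ {C})]`, taken in
the free `K`-module on set partitions. -/
noncomputable def pComp (K : Type*) [CommRing K] (s : α)
    (π τ : Finset (Finset α)) : Finset (Finset α) →₀ K :=
  ∑ C ∈ τ, Finsupp.single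
    (insert ((blockOf π s \ {s}) ∪ C) (π.erase (blockOf π s) ∪ τ.erase C)) 1

/-- The bilinear extension of `▷_s` to the free `K`-module on set partitions. -/
noncomputable def pCompL (K : Type*) [CommRing K] (s : α)
    (x y : Finset (Finset α) →₀ K) : Finset (Finset α) →₀ K :=
  x.sum fun π a => y.sum fun τ b => (a * b) • pComp K s π τ

lemma blockOf_eq {π : Finset (Finset α)} {s : α} {B : Finset α}
    (hB : B ∈ π) (hs : s ∈ B) (huniq : ∀ C ∈ π, s ∈ C → C = B) :
    blockOf π s = B := by
  unfold blockOf
  ext x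
  simp only [Finset.mem_biUnion]
  constructor
  · rintro ⟨C, hC, hx⟩
    split_ifs at hx with h
    · exact (huniq C hC h) ▸ hx
    · simp at hx
  · intro hx
    exact ⟨B, hB, by simp [hs, hx]⟩

lemma blockOf_spec {π : Finset (Finset α)} {S : Finset α} (hπ : IsSetPartition π S)
    {s : α} (hs : s ∈ S) :
    blockOf π s ∈ π ∧ s ∈ blockOf π s ∧ ∀ C ∈ π, s ∈ C → C = blockOf π s := by
  rw [← hπ.2.2] at hs
  simp only [Finset.mem_biUnion, id] at hs
  obtain ⟨B, hB, hsB⟩ := hs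
  have huniq : ∀ C ∈ π, s ∈ C → C = B := by
    intro C hC hsC
    by_contra hne
    exact Finset.disjoint_left.mp (hπ.2.1 C hC B hB hne) hsC hsB
  have hb := blockOf_eq hB hsB huniq
  exact ⟨hb ▸ hB, hb ▸ hsB, fun C hC hsC => (huniq C hC hsC).trans hb.symm⟩

/-- Elements of blocks of a partition of `S` lie in `S`. -/
lemma mem_of_mem_block {π : Finset (Finset α)} {S : Finset α} (hπ : IsSetPartition π S)
    {B : Finset α} (hB : B ∈ π) {x : α} (hx : x ∈ B) : x ∈ S := by
  rw [← hπ.2.2]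
  exact Finset.mem_biUnion.mpr ⟨B, hB, hx⟩

/-- Bilinear expansion of a one-step composition against basis elements. -/
lemma pCompL_expand (K : Type*) [CommRing K] (s s' : α) (π τ ρ : Finset (Finset α)) :
    pCompL K s' (pComp K s π τ) (Finsupp.single ρ 1) =
      ∑ C ∈ τ, pComp K s'
        (insert ((blockOf π s \ {s}) ∪ C) (π.erase (blockOf π s) ∪ τ.erase C)) ρ := by
  unfold pCompL
  have h1 : (pComp K s π τ).sum
        (fun π₁ a => (Finsupp.single ρ (1:K)).sum fun τ₁ b => (a * b) • pComp K s' π₁ τ₁)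
      = (pComp K s π τ).sum fun π₁ a => a • pComp K s' π₁ ρ := by
    refine Finsupp.sum_congr fun π₁ _ => ?_
    rw [Finsupp.sum_single_index (by simp)]
    simp
  rw [h1]
  unfold pComp
  rw [← Finsupp.sum_finsetSum_index (by intro i; simp) (by intro i x y; rw [add_smul])]
  refine Finset.sum_congr rfl fun C hC => ?_
  rw [Finsupp.sum_single_index (by simp), one_smul]

/-- Key step, case where `s'` lies in the block of `s`. -/
lemma keyterm_pos {S T : Finset α} {π τ : Finset (Finset α)}
    (hπ : IsSetPartition π S) (hτ : IsSetPartition τ T) (hST : Disjoint S T)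
    {s s' : α} (hs : s ∈ S) (hs' : s' ∈ S) (hss' : s ≠ s')
    {C : Finset α} (hC : C ∈ τ) (hs'B : s' ∈ blockOf π s)
    (D : Finset α) (ρ : Finset (Finset α)) :
    insert
      ((blockOf (insert ((blockOf π s \ {s}) ∪ C)
          (π.erase (blockOf π s) ∪ τ.erase C)) s' \ {s'}) ∪ D)
      ((insert ((blockOf π s \ {s}) ∪ C)
          (π.erase (blockOf π s) ∪ τ.erase C)).erase
        (blockOf (insert ((blockOf π s \ {s}) ∪ C)
          (π.erase (blockOf π s) ∪ τ.erase C)) s') ∪ ρ.erase D) =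
    insert ((((blockOf π s \ {s}) ∪ C) \ {s'}) ∪ D)
      ((π.erase (blockOf π s) ∪ τ.erase C) ∪ ρ.erase D) := by
  obtain ⟨hBπ, hsB, huB⟩ := blockOf_spec hπ hs
  set B := blockOf π s with hBdef
  set X := (B \ {s}) ∪ C with hXdef
  have hs'X : s' ∈ X := Finset.mem_union_left _ (Finset.mem_sdiff.mpr ⟨hs'B, by simp [hss'.symm]⟩)
  have hs'T : s' ∉ T := Finset.disjoint_left.mp hST hs'
  -- X is not one of the remaining blocks
  have hXnotin : X ∉ π.erase B ∪ τ.erase C := by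
    intro h
    rcases Finset.mem_union.mp h with h | h
    · obtain ⟨t, ht⟩ := hτ.1 C hC
      have htT : t ∈ T := mem_of_mem_block hτ hC ht
      have htS : t ∈ S := mem_of_mem_block hπ (Finset.mem_of_mem_erase h)
        (Finset.mem_union_right _ ht)
      exact Finset.disjoint_left.mp hST htS htT
    · exact hs'T (mem_of_mem_block hτ (Finset.mem_of_mem_erase h) hs'X)
  have hblock : blockOf (insert X (π.erase B ∪ τ.erase C)) s' = X := by
    refine blockOf_eq (Finset.mem_insert_self _ _) hs'X ?_
    intro Cb hCb hs'Cb
    rcases Finset.mem_insert.mp hCb with h | h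
    · exact h
    rcases Finset.mem_union.mp h with h | h
    · have : Cb = B := by
        by_contra hne
        exact Finset.disjoint_left.mp
          (hπ.2.1 Cb (Finset.mem_of_mem_erase h) B hBπ hne) hs'Cb hs'B
      exact absurd this (Finset.ne_of_mem_erase h)
    · exact absurd (mem_of_mem_block hτ (Finset.mem_of_mem_erase h) hs'Cb) hs'T
  rw [hblock, Finset.erase_insert hXnotin]

/-- Key step, case where `s'` does not lie in the block of `s`. -/
lemma keyterm_neg {S T : Finset α} {π τ : Finset (Finset α)}
    (hπ : IsSetPartition π S) (hτ : IsSetPartition τ T) (hST : Disjoint S T)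
    {s s' : α} (hs : s ∈ S) (hs' : s' ∈ S) (hss' : s ≠ s')
    {C : Finset α} (hC : C ∈ τ) (hs'B : s' ∉ blockOf π s)
    (D : Finset α) (ρ : Finset (Finset α)) :
    insert
      ((blockOf (insert ((blockOf π s \ {s}) ∪ C)
          (π.erase (blockOf π s) ∪ τ.erase C)) s' \ {s'}) ∪ D)
      ((insert ((blockOf π s \ {s}) ∪ C)
          (π.erase (blockOf π s) ∪ τ.erase C)).erase
        (blockOf (insert ((blockOf π s \ {s}) ∪ C)
          (π.erase (blockOf π s) ∪ τ.erase C)) s') ∪ ρ.erase D) =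
    insert ((blockOf π s' \ {s'}) ∪ D)
      (insert ((blockOf π s \ {s}) ∪ C)
        (((π.erase (blockOf π s)).erase (blockOf π s') ∪ τ.erase C) ∪ ρ.erase D)) := by
  obtain ⟨hBπ, hsB, huB⟩ := blockOf_spec hπ hs
  obtain ⟨hB'π, hs'B', huB'⟩ := blockOf_spec hπ hs'
  set B := blockOf π s with hBdef
  set B' := blockOf π s' with hB'def
  set X := (B \ {s}) ∪ C with hXdef
  have hs'T : s' ∉ T := Finset.disjoint_left.mp hST hs'
  have hs'C : s' ∉ C := fun h => hs'T (mem_of_mem_block hτ hC h)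
  have hs'X : s' ∉ X := by
    intro h
    rcases Finset.mem_union.mp h with h | h
    · exact hs'B (Finset.mem_sdiff.mp h).1
    · exact hs'C h
  have hBneB' : B ≠ B' := fun h => hs'B (h ▸ hs'B')
  have hB'mem : B' ∈ insert X (π.erase B ∪ τ.erase C) :=
    Finset.mem_insert_of_mem (Finset.mem_union_left _
      (Finset.mem_erase.mpr ⟨hBneB'.symm, hB'π⟩))
  have hblock : blockOf (insert X (π.erase B ∪ τ.erase C)) s' = B' := by
    refine blockOf_eq hB'mem hs'B' ?_
    intro Cb hCb hs'Cb
    rcases Finset.mem_insert.mp hCb with h | h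
    · exact absurd (h ▸ hs'Cb) hs'X
    rcases Finset.mem_union.mp h with h | h
    · exact huB' Cb (Finset.mem_of_mem_erase h) hs'Cb
    · exact absurd (mem_of_mem_block hτ (Finset.mem_of_mem_erase h) hs'Cb) hs'T
  have hXneB' : X ≠ B' := fun h => hs'X (h ▸ hs'B')
  have hB'notτ : B' ∉ τ.erase C := fun h =>
    hs'T (mem_of_mem_block hτ (Finset.mem_of_mem_erase h) hs'B')
  rw [hblock, Finset.erase_insert_of_ne hXneB', Finset.erase_union_distrib,
    Finset.erase_eq_of_notMem hB'notτ, Finset.insert_union]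

set_option maxHeartbeats 2000000 in
/-- Parallel associativity `(π ▷_s τ) ▷_{s'} ρ = (π ▷_{s'} ρ) ▷_s τ`
for the NPL-operad structure on the species of set partitions (the instance for
`Com₊` of the NPL-operad structure on `E ∘ q`). -/
theorem pComp_parallel_assoc (K : Type*) [CommRing K]
    (S T R : Finset α) (π τ ρ : Finset (Finset α))
    (hπ : IsSetPartition π S) (hτ : IsSetPartition τ T) (hρ : IsSetPartition ρ R)
    (hS : S.Nonempty) (hT : T.Nonempty) (hR : R.Nonempty)
    (hST : Disjoint S T) (hSR : Disjoint S R) (hTR : Disjoint T R)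
    (s s' : α) (hs : s ∈ S) (hs' : s' ∈ S) (hss' : s ≠ s') :
    pCompL K s' (pComp K s π τ) (Finsupp.single ρ 1) =
      pCompL K s (pComp K s' π ρ) (Finsupp.single τ 1) := by
  obtain ⟨hBπ, hsB, huB⟩ := blockOf_spec hπ hs
  obtain ⟨hB'π, hs'B', huB'⟩ := blockOf_spec hπ hs'
  rw [pCompL_expand, pCompL_expand]
  simp only [pComp]
  rw [Finset.sum_comm (s := ρ) (t := τ)]
  refine Finset.sum_congr rfl fun C hC => Finset.sum_congr rfl fun D hD => ?_
  congr 1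
  by_cases hs'B : s' ∈ blockOf π s
  · -- s and s' share a block
    have hBB' : blockOf π s = blockOf π s' := huB' _ hBπ hs'B
    have hsB' : s ∈ blockOf π s' := hBB' ▸ hsB
    rw [keyterm_pos hπ hτ hST hs hs' hss' hC hs'B D ρ,
      keyterm_pos hπ hρ hSR hs' hs hss'.symm hD hsB' C τ]
    have hsC : s ∉ C := fun h => Finset.disjoint_left.mp hST hs (mem_of_mem_block hτ hC h)
    have hs'C : s' ∉ C := fun h => Finset.disjoint_left.mp hST hs' (mem_of_mem_block hτ hC h)
    have hsD : s ∉ D := fun h => Finset.disjoint_left.mp hSR hs (mem_of_mem_block hρ hD h)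
    have hs'D : s' ∉ D := fun h => Finset.disjoint_left.mp hSR hs' (mem_of_mem_block hρ hD h)
    congr 1
    · rw [← hBB']
      ext x
      have h1 : x ∈ C → x ≠ s := fun hx he => hsC (he ▸ hx)
      have h2 : x ∈ C → x ≠ s' := fun hx he => hs'C (he ▸ hx)
      have h3 : x ∈ D → x ≠ s := fun hx he => hsD (he ▸ hx)
      have h4 : x ∈ D → x ≠ s' := fun hx he => hs'D (he ▸ hx)
      simp only [Finset.mem_union, Finset.mem_sdiff, Finset.mem_singleton]
      tauto
    · rw [← hBB', Finset.union_right_comm]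
  · -- s and s' lie in distinct blocks
    have hsB' : s ∉ blockOf π s' := fun h => hs'B ((huB _ hB'π h) ▸ hs'B')
    rw [keyterm_neg hπ hτ hST hs hs' hss' hC hs'B D ρ,
      keyterm_neg hπ hρ hSR hs' hs hss'.symm hD hsB' C τ]
    rw [Finset.insert_comm]
    rw [Finset.erase_right_comm, Finset.union_right_comm]
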